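/- The Cayley embedding R_cayley equals the set of all (x, y, z) ∈ ℝ^η × ℝ × ℝ^d with x ∈ D and z ∈ Δ^d such that: for every ᾱ ∈ ℝ^η, y ≤ ᾱ · x + Σ_{k=1}^d ( max_{x' ∈ D_{|k}} (w^k − ᾱ) · x' + b^k ) z_k, and for every α̲ ∈ ℝ^η, y ≥ α̲ · x + Σ_{k=1}^d ( min_{x' ∈ D_{|k}} (w^k − α̲) · x' + b^k ) z_k. -/

import Mathlib

open scoped Pointwise

noncomputable section

/-- Dot product on `Fin n → ℝ`. -/
def dotp {n : ℕ} (w x : Fin n → ℝ) : ℝ := ∑ i, w i * x i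

/-- The affine function `f^k(x) = w^k ⬝ x + b^k`. -/
def affK {η d : ℕ} (w : Fin d → Fin η → ℝ) (b : Fin d → ℝ) (k : Fin d) (x : Fin η → ℝ) : ℝ :=
  dotp (w k) x + b k

/-- `D_{|k}`: the part of the domain where `f^k` attains the maximum. -/
def DrestrK {η d : ℕ} (D : Set (Fin η → ℝ)) (w : Fin d → Fin η → ℝ) (b : Fin d → ℝ)
    (k : Fin d) : Set (Fin η → ℝ) :=
  {x ∈ D | ∀ ℓ, affK w b ℓ x ≤ affK w b k x}

/-- `S_cayley = ∪_k {(x, f^k(x), e^k) : x ∈ D_{|k}}`. -/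
def Scayley {η d : ℕ} (D : Set (Fin η → ℝ)) (w : Fin d → Fin η → ℝ) (b : Fin d → ℝ) :
    Set ((Fin η → ℝ) × ℝ × (Fin d → ℝ)) :=
  ⋃ k, (fun x => (x, affK w b k x, Pi.single k (1 : ℝ))) '' DrestrK D w b k

/-- The Cayley embedding `R_cayley = conv(S_cayley)`. -/
def Rcayley {η d : ℕ} (D : Set (Fin η → ℝ)) (w : Fin d → Fin η → ℝ) (b : Fin d → ℝ) :
    Set ((Fin η → ℝ) × ℝ × (Fin d → ℝ)) :=
  convexHull ℝ (Scayley D w b)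
/-! ### Auxiliary lemmas -/

lemma dotp_add_right' {n : ℕ} (c x y : Fin n → ℝ) : dotp c (x + y) = dotp c x + dotp c y := by
  simp [dotp, mul_add, Finset.sum_add_distrib]

lemma dotp_smul_right' {n : ℕ} (c : Fin n → ℝ) (t : ℝ) (x : Fin n → ℝ) :
    dotp c (t • x) = t * dotp c x := by
  simp [dotp, Finset.mul_sum]; exact Finset.sum_congr rfl (fun i _ => by ring)

lemma dotp_sub_left' {n : ℕ} (c a x : Fin n → ℝ) : dotp (c - a) x = dotp c x - dotp a x := by
  simp [dotp, sub_mul, Finset.sum_sub_distrib]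

lemma dotp_smul_left' {n : ℕ} (t : ℝ) (c x : Fin n → ℝ) : dotp (t • c) x = t * dotp c x := by
  simp [dotp, Finset.mul_sum]; exact Finset.sum_congr rfl (fun i _ => by ring)

lemma dotp_continuous' {n : ℕ} (c : Fin n → ℝ) : Continuous (dotp c) := by
  unfold dotp; fun_prop

lemma dotp_isLinearMap' {n : ℕ} (c : Fin n → ℝ) : IsLinearMap ℝ (dotp c) :=
  ⟨dotp_add_right' c, fun t x => dotp_smul_right' c t x⟩

lemma affK_continuous' {η d : ℕ} (w : Fin d → Fin η → ℝ) (b : Fin d → ℝ) (k : Fin d) :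
    Continuous (affK w b k) := by
  unfold affK; exact (dotp_continuous' _).add continuous_const

lemma DrestrK_closed' {η d : ℕ} {D : Set (Fin η → ℝ)} (hD : IsClosed D)
    (w : Fin d → Fin η → ℝ) (b : Fin d → ℝ) (k : Fin d) :
    IsClosed (DrestrK D w b k) := by
  have : DrestrK D w b k = D ∩ ⋂ ℓ, {x | affK w b ℓ x ≤ affK w b k x} := by
    ext x; simp [DrestrK]
  rw [this]
  exact hD.inter (isClosed_iInter fun ℓ =>
    isClosed_le (affK_continuous' w b ℓ) (affK_continuous' w b k))

lemma DrestrK_compact' {η d : ℕ} {D : Set (Fin η → ℝ)} (hD : IsClosed D)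
    (hDbd : Bornology.IsBounded D)
    (w : Fin d → Fin η → ℝ) (b : Fin d → ℝ) (k : Fin d) :
    IsCompact (DrestrK D w b k) := by
  refine Metric.isCompact_of_isClosed_isBounded (DrestrK_closed' hD w b k) ?_
  exact hDbd.subset (fun x hx => hx.1)

lemma Dconvex' {η : ℕ} {m : ℕ} (A : Fin m → Fin η → ℝ) (c : Fin m → ℝ) :
    Convex ℝ {x : Fin η → ℝ | ∀ i, dotp (A i) x ≤ c i} := by
  have : {x : Fin η → ℝ | ∀ i, dotp (A i) x ≤ c i} = ⋂ i, {x | dotp (A i) x ≤ c i} := by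
    ext x; simp
  rw [this]
  exact convex_iInter fun i => convex_halfSpace_le (dotp_isLinearMap' (A i)) (c i)

lemma DrestrK_convex' {η d : ℕ} {D : Set (Fin η → ℝ)} (hDconv : Convex ℝ D)
    (w : Fin d → Fin η → ℝ) (b : Fin d → ℝ) (k : Fin d) :
    Convex ℝ (DrestrK D w b k) := by
  have he : DrestrK D w b k = D ∩ ⋂ ℓ, {x | dotp (w ℓ - w k) x ≤ b k - b ℓ} := by
    ext x
    simp only [DrestrK, Set.mem_setOf_eq, Set.mem_inter_iff, Set.mem_iInter, affK, dotp_sub_left']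
    constructor
    · rintro ⟨h1, h2⟩; exact ⟨h1, fun ℓ => by have := h2 ℓ; linarith⟩
    · rintro ⟨h1, h2⟩; exact ⟨h1, fun ℓ => by have := h2 ℓ; linarith⟩
  rw [he]
  exact hDconv.inter (convex_iInter fun ℓ =>
    convex_halfSpace_le (dotp_isLinearMap' (w ℓ - w k)) (b k - b ℓ))

lemma funct_decomp {η d : ℕ} (f : ((Fin η → ℝ) × ℝ × (Fin d → ℝ)) →L[ℝ] ℝ)
    (x : Fin η → ℝ) (y : ℝ) (z : Fin d → ℝ) :
    f (x, y, z) = (∑ i, x i * f (Pi.single i 1, 0, 0)) + y * f (0, 1, 0)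
      + ∑ k, z k * f (0, 0, Pi.single k 1) := by
  have h1 : ∀ (n : ℕ) (v : Fin n → ℝ), ∑ i, v i • (Pi.single i (1:ℝ) : Fin n → ℝ) = v := by
    intro n v
    have : ∀ i : Fin n, v i • (Pi.single i (1:ℝ) : Fin n → ℝ) = Pi.single i (v i) := by
      intro i; ext j; by_cases h : j = i <;> simp [Pi.single_apply, h]
    simp only [this]; exact Finset.univ_sum_single v
  have hx : (x, y, z) = (∑ i, x i • ((Pi.single i 1 : Fin η → ℝ), (0:ℝ), (0:Fin d → ℝ)))
      + y • ((0 : Fin η → ℝ), (1:ℝ), (0:Fin d → ℝ))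
      + ∑ k, z k • ((0 : Fin η → ℝ), (0:ℝ), (Pi.single k 1 : Fin d → ℝ)) := by
    ext j
    · simp [Prod.fst_sum]
      have := congrFun (h1 η x) j
      simpa using this.symm
    · simp [Prod.snd_sum, Prod.fst_sum]
    · simp [Prod.snd_sum]
      have := congrFun (h1 d z) j
      simpa using this.symm
  conv_lhs => rw [hx]
  rw [map_add, map_add, map_sum, map_sum, map_smul]
  simp only [map_smul, smul_eq_mul]
section HullUnion

variable {E : Type*} [NormedAddCommGroup E] [NormedSpace ℝ E]


lemma hull_iUnion_eq {n : ℕ} (S : Fin n → Set E) (hc : ∀ k, Convex ℝ (S k))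
    (hne : ∀ k, (S k).Nonempty) :
    convexHull ℝ (⋃ k, S k)
      = (fun p : (Fin n → ℝ) × (Fin n → E) => ∑ k, p.1 k • p.2 k) ''
          ((stdSimplex ℝ (Fin n)) ×ˢ Set.univ.pi S) := by
  classical
  apply le_antisymm
  · apply convexHull_min
    · intro x hx
      obtain ⟨k, hxk⟩ := Set.mem_iUnion.1 hx
      refine ⟨(Pi.single k 1, Function.update (fun ℓ => (hne ℓ).some) k x), ⟨⟨?_, ?_⟩, ?_⟩, ?_⟩
      · intro ℓ; by_cases h : ℓ = k <;> simp [Pi.single_apply, h]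
      · simp [Pi.single_apply]
      · intro ℓ _
        by_cases h : ℓ = k
        · subst h; simpa using hxk
        · simp only [Function.update_of_ne h]; exact (hne ℓ).some_mem
      · simp only
        rw [Finset.sum_eq_single k]
        · simp
        · intro ℓ _ hℓ; simp [Pi.single_eq_of_ne hℓ]
        · simp
    · intro p hp q hq t1 t2 ht1 ht2 hsum
      obtain ⟨⟨z, v⟩, ⟨hz, hv⟩, rfl⟩ := hp
      obtain ⟨⟨z', v'⟩, ⟨hz', hv'⟩, rfl⟩ := hq
      set c : Fin n → ℝ := t1 • z + t2 • z' with hcdef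
      have hcmem : c ∈ stdSimplex ℝ (Fin n) := (convex_stdSimplex ℝ _) hz hz' ht1 ht2 hsum
      set m : Fin n → E := fun k =>
        if h : c k = 0 then v k
        else ((t1 * z k) / c k) • v k + ((t2 * z' k) / c k) • v' k with hmdef
      have hm : ∀ k, m k ∈ S k := by
        intro k
        by_cases h : c k = 0
        · simp only [hmdef, h, dif_pos]; exact hv k (Set.mem_univ k)
        · simp only [hmdef, h, dif_neg, not_false_iff]
          refine (hc k) (hv k (Set.mem_univ k)) (hv' k (Set.mem_univ k)) ?_ ?_ ?_
          · exact div_nonneg (mul_nonneg ht1 (hz.1 k)) (hcmem.1 k)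
          · exact div_nonneg (mul_nonneg ht2 (hz'.1 k)) (hcmem.1 k)
          · show t1 * z k / c k + t2 * z' k / c k = 1
            rw [← add_div, div_eq_one_iff_eq h]
            simp [hcdef]
      refine ⟨(c, m), ⟨hcmem, fun k _ => hm k⟩, ?_⟩
      simp only
      have hterm : ∀ k, c k • m k = (t1 * z k) • v k + (t2 * z' k) • v' k := by
        intro k
        by_cases h : c k = 0
        · have e : t1 * z k + t2 * z' k = 0 := h
          have h1 : t1 * z k = 0 ∧ t2 * z' k = 0 := by
            constructor <;> nlinarith [mul_nonneg ht1 (hz.1 k), mul_nonneg ht2 (hz'.1 k)]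
          simp [h, h1.1, h1.2]
        · simp only [hmdef, h, dif_neg, not_false_iff, smul_add, smul_smul]
          rw [mul_div_cancel₀ _ h, mul_div_cancel₀ _ h]
      rw [Finset.sum_congr rfl (fun k _ => hterm k), Finset.sum_add_distrib, Finset.smul_sum, Finset.smul_sum]
      congr 1 <;> exact (Finset.sum_congr rfl (fun k _ => by rw [smul_smul])).symm
  · rintro _ ⟨⟨z, v⟩, ⟨hz, hv⟩, rfl⟩
    exact (convex_convexHull ℝ _).sum_mem (fun k _ => hz.1 k) hz.2
      (fun k _ => subset_convexHull ℝ _ (Set.mem_iUnion.2 ⟨k, hv k (Set.mem_univ k)⟩))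

lemma hull_iUnion_compact {n : ℕ} (S : Fin n → Set E) (hc : ∀ k, Convex ℝ (S k))
    (hne : ∀ k, (S k).Nonempty) (hcomp : ∀ k, IsCompact (S k)) :
    IsCompact (convexHull ℝ (⋃ k, S k)) := by
  rw [hull_iUnion_eq S hc hne]
  refine IsCompact.image ?_ ?_
  · exact (isCompact_stdSimplex _ _).prod (isCompact_univ_pi hcomp)
  · exact continuous_finset_sum _ fun k _ =>
      ((continuous_apply k).comp continuous_fst).smul ((continuous_apply k).comp continuous_snd)

end HullUnion
lemma Dclosed' {η : ℕ} {m : ℕ} (A : Fin m → Fin η → ℝ) (c : Fin m → ℝ) :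
    IsClosed {x : Fin η → ℝ | ∀ i, dotp (A i) x ≤ c i} := by
  have : {x : Fin η → ℝ | ∀ i, dotp (A i) x ≤ c i} = ⋂ i, {x | dotp (A i) x ≤ c i} := by
    ext x; simp
  rw [this]
  exact isClosed_iInter fun i => isClosed_le (dotp_continuous' _) continuous_const

lemma affK_combo {η d : ℕ} (w : Fin d → Fin η → ℝ) (b : Fin d → ℝ) (k : Fin d)
    (x x' : Fin η → ℝ) {t1 t2 : ℝ} (hsum : t1 + t2 = 1) :
    affK w b k (t1 • x + t2 • x') = t1 * affK w b k x + t2 * affK w b k x' := by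
  unfold affK
  rw [dotp_add_right', dotp_smul_right', dotp_smul_right']
  linear_combination (b k) * hsum.symm

lemma Sk_convex {η d : ℕ} {D : Set (Fin η → ℝ)} (hDconv : Convex ℝ D)
    (w : Fin d → Fin η → ℝ) (b : Fin d → ℝ) (k : Fin d) :
    Convex ℝ (((fun x => (x, affK w b k x, Pi.single k (1 : ℝ))) '' DrestrK D w b k :
      Set ((Fin η → ℝ) × ℝ × (Fin d → ℝ)))) := by
  intro p hp q hq t1 t2 ht1 ht2 hsum
  obtain ⟨x, hx, rfl⟩ := hp
  obtain ⟨x', hx', rfl⟩ := hq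
  refine ⟨t1 • x + t2 • x', DrestrK_convex' hDconv w b k hx hx' ht1 ht2 hsum, ?_⟩
  have haff := affK_combo w b k x x' hsum
  have hsingle : t1 • (Pi.single k (1:ℝ) : Fin d → ℝ) + t2 • (Pi.single k (1:ℝ) : Fin d → ℝ)
      = (Pi.single k (1:ℝ) : Fin d → ℝ) := by
    rw [← add_smul, hsum, one_smul]
  simp only [Prod.smul_mk, Prod.mk_add_mk, smul_eq_mul, Prod.mk.injEq]
  exact ⟨trivial, haff, hsingle.symm⟩
lemma rhs_convex {η d : ℕ} (w : Fin d → Fin η → ℝ) (b : Fin d → ℝ)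
    {D : Set (Fin η → ℝ)} (hDconv : Convex ℝ D) :
    Convex ℝ {p : (Fin η → ℝ) × ℝ × (Fin d → ℝ) |
      p.1 ∈ D ∧ p.2.2 ∈ stdSimplex ℝ (Fin d)
      ∧ (∀ a : Fin η → ℝ,
          p.2.1 ≤ dotp a p.1
            + ∑ k, (sSup ((fun x' => dotp (w k - a) x') '' DrestrK D w b k) + b k) * p.2.2 k)
      ∧ (∀ a : Fin η → ℝ,
          dotp a p.1
            + ∑ k, (sInf ((fun x' => dotp (w k - a) x') '' DrestrK D w b k) + b k) * p.2.2 k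
            ≤ p.2.1)} := by
  intro p hp q hq t1 t2 ht1 ht2 hsum
  obtain ⟨hp1, hp2, hp3, hp4⟩ := hp
  obtain ⟨hq1, hq2, hq3, hq4⟩ := hq
  have e1 : (t1 • p + t2 • q).1 = t1 • p.1 + t2 • q.1 := rfl
  have e2 : (t1 • p + t2 • q).2.1 = t1 * p.2.1 + t2 * q.2.1 := rfl
  have e3 : (t1 • p + t2 • q).2.2 = t1 • p.2.2 + t2 • q.2.2 := rfl
  have hsplit : ∀ c : Fin d → ℝ,
      ∑ k, c k * (t1 • p.2.2 + t2 • q.2.2) k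
        = t1 * (∑ k, c k * p.2.2 k) + t2 * (∑ k, c k * q.2.2 k) := by
    intro c
    rw [Finset.mul_sum, Finset.mul_sum, ← Finset.sum_add_distrib]
    exact Finset.sum_congr rfl fun k _ => by
      simp only [Pi.add_apply, Pi.smul_apply, smul_eq_mul]; ring
  refine ⟨?_, ?_, ?_, ?_⟩
  · rw [e1]
    exact hDconv hp1 hq1 ht1 ht2 hsum
  · rw [e3]
    exact (convex_stdSimplex ℝ _) hp2 hq2 ht1 ht2 hsum
  · intro a
    have h1 := hp3 a
    have h2 := hq3 a
    rw [e1, e2, e3, dotp_add_right', dotp_smul_right', dotp_smul_right',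
      hsplit (fun k => sSup ((fun x' => dotp (w k - a) x') '' DrestrK D w b k) + b k)]
    nlinarith [mul_le_mul_of_nonneg_left h1 ht1, mul_le_mul_of_nonneg_left h2 ht2]
  · intro a
    have h1 := hp4 a
    have h2 := hq4 a
    rw [e1, e2, e3, dotp_add_right', dotp_smul_right', dotp_smul_right',
      hsplit (fun k => sInf ((fun x' => dotp (w k - a) x') '' DrestrK D w b k) + b k)]
    nlinarith [mul_le_mul_of_nonneg_left h1 ht1, mul_le_mul_of_nonneg_left h2 ht2]

lemma Ssub {η d : ℕ} (w : Fin d → Fin η → ℝ) (b : Fin d → ℝ)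
    {D : Set (Fin η → ℝ)} (hDcl : IsClosed D) (hDbd : Bornology.IsBounded D) :
    Scayley D w b ⊆ {p : (Fin η → ℝ) × ℝ × (Fin d → ℝ) |
      p.1 ∈ D ∧ p.2.2 ∈ stdSimplex ℝ (Fin d)
      ∧ (∀ a : Fin η → ℝ,
          p.2.1 ≤ dotp a p.1
            + ∑ k, (sSup ((fun x' => dotp (w k - a) x') '' DrestrK D w b k) + b k) * p.2.2 k)
      ∧ (∀ a : Fin η → ℝ,
          dotp a p.1
            + ∑ k, (sInf ((fun x' => dotp (w k - a) x') '' DrestrK D w b k) + b k) * p.2.2 k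
            ≤ p.2.1)} := by
  intro p hp
  simp only [Scayley, Set.mem_iUnion] at hp
  obtain ⟨k, x, hx, rfl⟩ := hp
  have hcolS : ∀ c : Fin d → ℝ, ∑ ℓ, c ℓ * (Pi.single k (1:ℝ) : Fin d → ℝ) ℓ = c k := by
    intro c
    rw [Finset.sum_eq_single k]
    · simp
    · intro ℓ _ hℓ; simp [Pi.single_eq_of_ne hℓ]
    · simp
  refine ⟨hx.1, ⟨?_, ?_⟩, ?_, ?_⟩
  · intro ℓ; by_cases h : ℓ = k <;> simp [Pi.single_apply, h]
  · simp [Pi.single_apply]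
  · intro a
    have hbdd : BddAbove ((fun x' => dotp (w k - a) x') '' DrestrK D w b k) :=
      ((DrestrK_compact' hDcl hDbd w b k).image (dotp_continuous' _)).bddAbove
    have hle : dotp (w k - a) x ≤ sSup ((fun x' => dotp (w k - a) x') '' DrestrK D w b k) :=
      le_csSup hbdd ⟨x, hx, rfl⟩
    rw [dotp_sub_left'] at hle
    show affK w b k x ≤ _
    rw [hcolS (fun ℓ => sSup ((fun x' => dotp (w ℓ - a) x') '' DrestrK D w b ℓ) + b ℓ)]
    unfold affK
    linarith
  · intro a
    have hbdd : BddBelow ((fun x' => dotp (w k - a) x') '' DrestrK D w b k) :=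
      ((DrestrK_compact' hDcl hDbd w b k).image (dotp_continuous' _)).bddBelow
    have hle : sInf ((fun x' => dotp (w k - a) x') '' DrestrK D w b k) ≤ dotp (w k - a) x :=
      csInf_le hbdd ⟨x, hx, rfl⟩
    rw [dotp_sub_left'] at hle
    show _ ≤ affK w b k x
    rw [hcolS (fun ℓ => sInf ((fun x' => dotp (w ℓ - a) x') '' DrestrK D w b ℓ) + b ℓ)]
    unfold affK
    linarith
lemma key_ub {η d : ℕ} (w : Fin d → Fin η → ℝ) (b : Fin d → ℝ) {D : Set (Fin η → ℝ)}
    (hDcl : IsClosed D) (hDbd : Bornology.IsBounded D)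
    (hne : ∀ k, (DrestrK D w b k).Nonempty)
    (α : Fin η → ℝ) (β : ℝ) (γ : Fin d → ℝ) (u : ℝ) (hβ : 0 < β)
    (hS : ∀ k, ∀ x' ∈ DrestrK D w b k, dotp α x' + β * affK w b k x' + γ k ≤ u)
    (x : Fin η → ℝ) (y : ℝ) (z : Fin d → ℝ) (hz : z ∈ stdSimplex ℝ (Fin d))
    (hup : y ≤ dotp ((-β⁻¹) • α) x
      + ∑ k, (sSup ((fun x' => dotp (w k - (-β⁻¹) • α) x') '' DrestrK D w b k) + b k) * z k) :
    dotp α x + β * y + ∑ k, γ k * z k ≤ u := by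
  set a : Fin η → ℝ := (-β⁻¹) • α with ha
  have hax : dotp a x = -β⁻¹ * dotp α x := dotp_smul_left' _ _ _
  have hcoef : ∀ k, β * (sSup ((fun x' => dotp (w k - a) x') '' DrestrK D w b k) + b k) + γ k ≤ u := by
    intro k
    have hcs : IsCompact ((fun x' => dotp (w k - a) x') '' DrestrK D w b k) :=
      (DrestrK_compact' hDcl hDbd w b k).image (dotp_continuous' _)
    have hmem := hcs.sSup_mem ((hne k).image _)
    obtain ⟨x', hx', hx'eq⟩ := hmem
    rw [← hx'eq]
    beta_reduce
    rw [dotp_sub_left']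
    have : dotp a x' = -β⁻¹ * dotp α x' := dotp_smul_left' _ _ _
    have h2 := hS k x' hx'
    unfold affK at h2
    have hβ' : β ≠ 0 := ne_of_gt hβ
    field_simp [this] at *
    nlinarith [h2]
  calc dotp α x + β * y + ∑ k, γ k * z k
      ≤ dotp α x + β * (dotp a x + ∑ k, (sSup ((fun x' => dotp (w k - a) x') '' DrestrK D w b k) + b k) * z k) + ∑ k, γ k * z k := by nlinarith [hup]
    _ = ∑ k, (β * (sSup ((fun x' => dotp (w k - a) x') '' DrestrK D w b k) + b k) + γ k) * z k := by
        rw [hax]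
        have hβ' : β ≠ 0 := ne_of_gt hβ
        have e1 : ∀ (c : Fin d → ℝ), ∑ k, (β * c k + γ k) * z k
            = β * ∑ k, c k * z k + ∑ k, γ k * z k := by
          intro c
          rw [Finset.mul_sum, ← Finset.sum_add_distrib]
          exact Finset.sum_congr rfl fun k _ => by ring
        rw [e1 (fun k => sSup ((fun x' => dotp (w k - a) x') '' DrestrK D w b k) + b k)]
        field_simp
        ring
    _ ≤ ∑ k, u * z k := Finset.sum_le_sum (fun k _ => mul_le_mul_of_nonneg_right (hcoef k) (hz.1 k))
    _ = u := by rw [← Finset.mul_sum, hz.2, mul_one]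
lemma key_lb {η d : ℕ} (w : Fin d → Fin η → ℝ) (b : Fin d → ℝ) {D : Set (Fin η → ℝ)}
    (hDcl : IsClosed D) (hDbd : Bornology.IsBounded D)
    (hne : ∀ k, (DrestrK D w b k).Nonempty)
    (α : Fin η → ℝ) (β : ℝ) (γ : Fin d → ℝ) (u : ℝ) (hβ : β < 0)
    (hS : ∀ k, ∀ x' ∈ DrestrK D w b k, dotp α x' + β * affK w b k x' + γ k ≤ u)
    (x : Fin η → ℝ) (y : ℝ) (z : Fin d → ℝ) (hz : z ∈ stdSimplex ℝ (Fin d))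
    (hlo : dotp ((-β⁻¹) • α) x
      + ∑ k, (sInf ((fun x' => dotp (w k - (-β⁻¹) • α) x') '' DrestrK D w b k) + b k) * z k ≤ y) :
    dotp α x + β * y + ∑ k, γ k * z k ≤ u := by
  set a : Fin η → ℝ := (-β⁻¹) • α with ha
  have hax : dotp a x = -β⁻¹ * dotp α x := dotp_smul_left' _ _ _
  have hcoef : ∀ k, β * (sInf ((fun x' => dotp (w k - a) x') '' DrestrK D w b k) + b k) + γ k ≤ u := by
    intro k
    have hcs : IsCompact ((fun x' => dotp (w k - a) x') '' DrestrK D w b k) :=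
      (DrestrK_compact' hDcl hDbd w b k).image (dotp_continuous' _)
    obtain ⟨x', hx', hx'eq⟩ := hcs.sInf_mem ((hne k).image _)
    rw [← hx'eq]
    beta_reduce
    rw [dotp_sub_left']
    have h3 : dotp a x' = -β⁻¹ * dotp α x' := dotp_smul_left' _ _ _
    have h2 := hS k x' hx'
    unfold affK at h2
    have hβ' : β ≠ 0 := ne_of_lt hβ
    field_simp [h3] at *
    nlinarith [h2]
  calc dotp α x + β * y + ∑ k, γ k * z k
      ≤ dotp α x + β * (dotp a x + ∑ k, (sInf ((fun x' => dotp (w k - a) x') '' DrestrK D w b k) + b k) * z k) + ∑ k, γ k * z k := by nlinarith [hlo]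
    _ = ∑ k, (β * (sInf ((fun x' => dotp (w k - a) x') '' DrestrK D w b k) + b k) + γ k) * z k := by
        rw [hax]
        have hβ' : β ≠ 0 := ne_of_lt hβ
        have e1 : ∀ (c : Fin d → ℝ), ∑ k, (β * c k + γ k) * z k
            = β * ∑ k, c k * z k + ∑ k, γ k * z k := by
          intro c
          rw [Finset.mul_sum, ← Finset.sum_add_distrib]
          exact Finset.sum_congr rfl fun k _ => by ring
        rw [e1 (fun k => sInf ((fun x' => dotp (w k - a) x') '' DrestrK D w b k) + b k)]
        field_simp
        ring
    _ ≤ ∑ k, u * z k := Finset.sum_le_sum (fun k _ => mul_le_mul_of_nonneg_right (hcoef k) (hz.1 k))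
    _ = u := by rw [← Finset.mul_sum, hz.2, mul_one]
/-- The dual characterization of the Cayley embedding.  Since each `D_{|k}` is a nonempty
compact set, the maxima/minima over `D_{|k}` are attained and coincide with `sSup`/`sInf`
of the corresponding image sets. -/
theorem stmt2 {η d : ℕ} (hη : 1 ≤ η) (hd : 1 ≤ d)
    (w : Fin d → Fin η → ℝ) (b : Fin d → ℝ)
    (D : Set (Fin η → ℝ))
    (hDpoly : ∃ (m : ℕ) (A : Fin m → Fin η → ℝ) (c : Fin m → ℝ),
      D = {x | ∀ i, dotp (A i) x ≤ c i})
    (hDne : D.Nonempty) (hDbd : Bornology.IsBounded D)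
    (hirr : ∀ k, ∃ x ∈ D, ∀ ℓ, ℓ ≠ k → affK w b ℓ x < affK w b k x) :
    Rcayley D w b = {p : (Fin η → ℝ) × ℝ × (Fin d → ℝ) |
      p.1 ∈ D ∧ p.2.2 ∈ stdSimplex ℝ (Fin d)
      ∧ (∀ a : Fin η → ℝ,
          p.2.1 ≤ dotp a p.1
            + ∑ k, (sSup ((fun x' => dotp (w k - a) x') '' DrestrK D w b k) + b k) * p.2.2 k)
      ∧ (∀ a : Fin η → ℝ,
          dotp a p.1
            + ∑ k, (sInf ((fun x' => dotp (w k - a) x') '' DrestrK D w b k) + b k) * p.2.2 k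
            ≤ p.2.1)} := by
  obtain ⟨m, A, cvec, hD⟩ := hDpoly
  have hDcl : IsClosed D := by rw [hD]; exact Dclosed' A cvec
  have hDconv : Convex ℝ D := by rw [hD]; exact Dconvex' A cvec
  have hne : ∀ k, (DrestrK D w b k).Nonempty := by
    intro k
    obtain ⟨x, hxD, hx⟩ := hirr k
    refine ⟨x, hxD, fun ℓ => ?_⟩
    by_cases h : ℓ = k
    · subst h; exact le_rfl
    · exact (hx ℓ h).le
  apply Set.Subset.antisymm
  · exact convexHull_min (Ssub w b hDcl hDbd) (rhs_convex w b hDconv)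
  · intro p hp
    obtain ⟨hp1, hp2, hp3, hp4⟩ := hp
    by_contra hnot
    have hcomp : IsCompact (Rcayley D w b) := by
      unfold Rcayley Scayley
      exact hull_iUnion_compact _ (fun k => Sk_convex hDconv w b k)
        (fun k => (hne k).image _)
        (fun k => (DrestrK_compact' hDcl hDbd w b k).image
          (continuous_id.prodMk ((affK_continuous' w b k).prodMk continuous_const)))
    obtain ⟨f, u, hfu, hup⟩ :=
      geometric_hahn_banach_closed_point (convex_convexHull ℝ _) hcomp.isClosed hnot
    have hfp : ∀ (x : Fin η → ℝ) (y : ℝ) (z : Fin d → ℝ),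
        f (x, y, z) = dotp (fun i => f (Pi.single i 1, 0, 0)) x + y * f (0, 1, 0)
          + ∑ k, z k * f (0, 0, Pi.single k 1) := by
      intro x y z
      rw [funct_decomp]
      congr 1
      congr 1
      exact Finset.sum_congr rfl fun i _ => mul_comm _ _
    set α : Fin η → ℝ := fun i => f (Pi.single i 1, 0, 0) with hα
    set β : ℝ := f (0, 1, 0) with hβdef
    set γ : Fin d → ℝ := fun k => f (0, 0, Pi.single k 1) with hγ
    have hS' : ∀ k, ∀ x' ∈ DrestrK D w b k,
        dotp α x' + β * affK w b k x' + γ k < u := by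
      intro k x' hx'
      have hmem : ((x', affK w b k x', Pi.single k (1:ℝ)) : (Fin η → ℝ) × ℝ × (Fin d → ℝ))
          ∈ Rcayley D w b :=
        subset_convexHull ℝ _ (Set.mem_iUnion.2 ⟨k, ⟨x', hx', rfl⟩⟩)
      have h0 := hfu _ hmem
      rw [hfp] at h0
      have hcol : ∑ k', (Pi.single k (1:ℝ) : Fin d → ℝ) k' * γ k' = γ k := by
        rw [Finset.sum_eq_single k]
        · simp
        · intro ℓ _ hℓ; simp [Pi.single_eq_of_ne hℓ]
        · simp
      rw [hcol] at h0
      have := mul_comm (affK w b k x') β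
      linarith
    have hfpu : u < dotp α p.1 + p.2.1 * β + ∑ k, p.2.2 k * γ k := by
      have e : f p = dotp α p.1 + p.2.1 * β + ∑ k, p.2.2 k * γ k := hfp p.1 p.2.1 p.2.2
      linarith [hup, e.symm.le, e.le]
    have hsc : ∑ k, γ k * p.2.2 k = ∑ k, p.2.2 k * γ k :=
      Finset.sum_congr rfl fun k _ => mul_comm _ _
    rcases lt_trichotomy β 0 with hβ | hβ | hβ
    · have hkey := key_lb w b hDcl hDbd hne α β γ u hβ
        (fun k x' hx' => (hS' k x' hx').le) p.1 p.2.1 p.2.2 hp2 (hp4 _)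
      have := mul_comm p.2.1 β
      linarith
    · -- β = 0 : perturb
      have hBk : ∀ k, ∃ Bk : ℝ, ∀ x' ∈ DrestrK D w b k, affK w b k x' ≤ Bk := by
        intro k
        have hc := (DrestrK_compact' hDcl hDbd w b k).image (affK_continuous' w b k)
        exact ⟨sSup (affK w b k '' DrestrK D w b k),
          fun x' hx' => le_csSup hc.bddAbove ⟨x', hx', rfl⟩⟩
      choose B hB using hBk
      haveI : Nonempty (Fin d) := ⟨⟨0, hd⟩⟩
      set Bm := Finset.univ.sup' Finset.univ_nonempty B with hBm
      have hBle : ∀ k, B k ≤ Bm := fun k => Finset.le_sup' B (Finset.mem_univ k)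
      set fpv := dotp α p.1 + ∑ k, p.2.2 k * γ k with hfpv
      have hufp : u < fpv := by
        have := hfpu; rw [hβ] at this; rw [hfpv]; linarith
      set C : ℝ := max (Bm - p.2.1) 1 with hCdef
      have hC : (0:ℝ) < C := lt_of_lt_of_le one_pos (le_max_right _ _)
      set ε := (fpv - u) / (2 * C) with hε
      have hεpos : 0 < ε := div_pos (by linarith) (by linarith)
      have hkey := key_ub w b hDcl hDbd hne α ε γ (u + ε * Bm) hεpos
        (fun k x' hx' => by
          have h0 := hS' k x' hx'
          rw [hβ] at h0
          have h1 : ε * affK w b k x' ≤ ε * Bm :=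
            mul_le_mul_of_nonneg_left (le_trans (hB k x' hx') (hBle k)) hεpos.le
          linarith)
        p.1 p.2.1 p.2.2 hp2 (hp3 _)
      have hεC : ε * C = (fpv - u) / 2 := by
        rw [hε]; field_simp
      have hεBm : ε * (Bm - p.2.1) ≤ ε * C :=
        mul_le_mul_of_nonneg_left (le_max_left _ _) hεpos.le
      have hms := mul_sub ε Bm p.2.1
      linarith
    · have hkey := key_ub w b hDcl hDbd hne α β γ u hβ
        (fun k x' hx' => (hS' k x' hx').le) p.1 p.2.1 p.2.2 hp2 (hp3 _)
      have := mul_comm p.2.1 β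
      linarith
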